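/- arXiv:2202.00897 — 2 statements merged into one kernel-verified Lean document; each statement's English description precedes it below -/
import Mathlib

section
/- Let (S_ζ : ζ < ν) be a sequence of subsets of ω and let (A_ε : ε < θ) be a ⊊*-decreasing sequence of infinite subsets of ω, where θ is a regular uncountable cardinal. For each ε < θ suppose ζ_ε < ν is minimal such that S_{ζ_ε} splits A_{ε'} for all ε' < ε, and suppose S_{ζ_ε} does not split A_ε. Then the sequence (ζ_ε : ε < θ) is strictly increasing; in particular θ ≤ ν. -/
/-- S splits A: both A ∩ S and A \ S are infinite. -/
def Splits (S A : Set ℕ) : Prop := (A ∩ S).Infinite ∧ (A \ S).Infinite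

/-- Given sets (S_ζ : ζ < ν) and a ⊊*-decreasing chain (A_ε : ε < θ) with θ
regular uncountable, if for each ε < θ, ζ_ε < ν is minimal such that S_{ζ_ε}
splits A_{ε'} for all ε' < ε, and S_{ζ_ε} does not split A_ε, then
(ζ_ε : ε < θ) is strictly increasing; in particular θ ≤ ν. -/
theorem stmt13 (θ : Cardinal) (hreg : θ.IsRegular) (hunc : Cardinal.aleph0 < θ)
    (ν : Ordinal) (S : Ordinal → Set ℕ) (A : Ordinal → Set ℕ)
    (hAinf : ∀ ε < θ.ord, (A ε).Infinite)
    (hdec : ∀ ε ε', ε < ε' → ε' < θ.ord →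
      (A ε' \ A ε).Finite ∧ (A ε \ A ε').Infinite)
    (ζ : Ordinal → Ordinal)
    (hζν : ∀ ε < θ.ord, ζ ε < ν)
    (hsplits : ∀ ε < θ.ord, ∀ ε' < ε, Splits (S (ζ ε)) (A ε'))
    (hmin : ∀ ε < θ.ord, ∀ ζ' < ζ ε, ¬ ∀ ε' < ε, Splits (S ζ') (A ε'))
    (hnot : ∀ ε < θ.ord, ¬ Splits (S (ζ ε)) (A ε)) :
    (∀ ε ε', ε < ε' → ε' < θ.ord → ζ ε < ζ ε') ∧ θ.ord ≤ ν := by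
  have hmono : ∀ ε ε', ε < ε' → ε' < θ.ord → ζ ε < ζ ε' := by
    intro ε ε' hlt hlt'
    have hε : ε < θ.ord := hlt.trans hlt'
    rcases lt_trichotomy (ζ ε) (ζ ε') with h | h | h
    · exact h
    · exact absurd (h ▸ hsplits ε' hlt' ε hlt) (hnot ε hε)
    · exact absurd (fun ε'' hε'' => hsplits ε' hlt' ε'' (hε''.trans hlt))
        (hmin ε hε (ζ ε') h)
  refine ⟨hmono, ?_⟩
  by_contra hle
  push_neg at hle
  have key : ∀ ε < θ.ord, ε ≤ ζ ε := by
    intro ε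
    induction ε using Ordinal.induction with
    | h ε ih =>
      intro hε
      by_contra hζ
      push_neg at hζ
      have h1 := ih (ζ ε) hζ (hζ.trans hε)
      exact absurd (hmono (ζ ε) ε hζ hε) (not_lt.mpr h1)
  exact absurd (hζν ν hle) (not_lt.mpr (key ν hle))
end

section
/- Suppose {A_γ : γ < θ} is a family of mad families on ω indexed by a regular uncountable cardinal θ, such that ⋃_{γ<θ} A_γ is dense in P(ω)/fin (for every infinite B ⊆ ω there is γ and A ∈ A_γ with A ⊆* B) and A_δ refines A_γ for γ ≤ δ. If additionally for every γ < θ there exist δ > γ, A ∈ A_δ, and B ∈ A_γ with A ⊊* B, then there is no mad family refining all A_γ; i.e., {A_γ : γ < θ} is a base matrix. -/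
/-- 𝒜 is a mad family on ω. -/
def IsMadFamily (𝒜 : Set (Set ℕ)) : Prop :=
  (∀ A ∈ 𝒜, A.Infinite) ∧
  (∀ A ∈ 𝒜, ∀ B ∈ 𝒜, A ≠ B → (A ∩ B).Finite) ∧
  ∀ B : Set ℕ, B.Infinite → ∃ A ∈ 𝒜, (A ∩ B).Infinite

/-- 𝒜 refines ℬ: every A ∈ 𝒜 is ⊆* some B ∈ ℬ. -/
def Refines (𝒜 ℬ : Set (Set ℕ)) : Prop :=
  ∀ A ∈ 𝒜, ∃ B ∈ ℬ, (A \ B).Finite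

/-- If (𝔄_γ : γ < θ) (θ regular uncountable) is a refining sequence of mad
families whose union is dense in P(ω)/fin, and for every γ there are δ > γ,
A ∈ 𝔄_δ and B ∈ 𝔄_γ with A ⊊* B, then there is no mad family refining all the
𝔄_γ; i.e. the family is a base matrix. -/
theorem stmt15 (θ : Cardinal) (hreg : θ.IsRegular) (hunc : Cardinal.aleph0 < θ)
    (𝔄 : Ordinal → Set (Set ℕ))
    (hmad : ∀ γ < θ.ord, IsMadFamily (𝔄 γ))
    (hdense : ∀ B : Set ℕ, B.Infinite →
      ∃ γ < θ.ord, ∃ A ∈ 𝔄 γ, (A \ B).Finite)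
    (href : ∀ γ δ, γ ≤ δ → δ < θ.ord → Refines (𝔄 δ) (𝔄 γ))
    (hproper : ∀ γ < θ.ord, ∃ δ, γ < δ ∧ δ < θ.ord ∧
      ∃ A ∈ 𝔄 δ, ∃ B ∈ 𝔄 γ, (A \ B).Finite ∧ (B \ A).Infinite) :
    ¬ ∃ 𝒞 : Set (Set ℕ), IsMadFamily 𝒞 ∧ ∀ γ < θ.ord, Refines 𝒞 (𝔄 γ) := by
  rintro ⟨𝒞, ⟨hCinf, _hCad, hCmax⟩, hCref⟩
  -- pick some C ∈ 𝒞
  obtain ⟨C, hC, -⟩ := hCmax Set.univ Set.infinite_univ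
  have hCi : C.Infinite := hCinf C hC
  have hCi' : (setOf (· ∈ C)).Infinite := by exact hCi
  -- split C into two infinite pieces using the enumeration of C
  set f : ℕ → ℕ := Nat.nth (· ∈ C) with hf
  have hfinj : Function.Injective f := Nat.nth_injective hCi'
  have hfmem : ∀ n, f n ∈ C := fun n => Nat.nth_mem_of_infinite hCi' n
  set Y : Set ℕ := Set.range (fun n => f (2 * n)) with hY
  have hYC : Y ⊆ C := by
    rintro x ⟨n, rfl⟩; exact hfmem _
  have hYinf : Y.Infinite :=
    Set.infinite_range_of_injective (fun a b h => by
      have := hfinj h; omega)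
  have hodd : Set.range (fun n => f (2 * n + 1)) ⊆ C \ Y := by
    rintro x ⟨n, rfl⟩
    refine ⟨hfmem _, ?_⟩
    rintro ⟨m, hm⟩
    have := hfinj hm; omega
  have hCYinf : (C \ Y).Infinite :=
    Set.Infinite.mono hodd
      (Set.infinite_range_of_injective (fun a b h => by
        have := hfinj h; omega))
  -- density: get a node A almost inside Y
  obtain ⟨γ, hγ, A, hA, hAY⟩ := hdense Y hYinf
  obtain ⟨hinfγ, hadγ, -⟩ := hmad γ hγ
  -- the node of C at level γ
  obtain ⟨B, hB, hCB⟩ := hCref γ hγ C hC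
  have hAi : A.Infinite := hinfγ A hA
  -- A ∩ C is infinite
  have hACinf : (A ∩ C).Infinite := by
    have hsub : A \ (A ∩ C) ⊆ A \ Y := by
      rintro x ⟨hxA, hx⟩
      exact ⟨hxA, fun hxY => hx ⟨hxA, hYC hxY⟩⟩
    have : (A \ (A ∩ C)).Finite := hAY.subset hsub
    by_contra hfin
    rw [Set.not_infinite] at hfin
    exact hAi ((hfin.union this).subset (fun x hx => by
      by_cases hxC : x ∈ C
      · exact Or.inl ⟨hx, hxC⟩
      · exact Or.inr ⟨hx, fun h => hxC h.2⟩))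
  -- hence A ∩ B is infinite
  have hABinf : (A ∩ B).Infinite := by
    have hsub : (A ∩ C) \ (A ∩ B) ⊆ C \ B := by
      rintro x ⟨⟨hxA, hxC⟩, hx⟩
      exact ⟨hxC, fun hxB => hx ⟨hxA, hxB⟩⟩
    have hfin : ((A ∩ C) \ (A ∩ B)).Finite := hCB.subset hsub
    by_contra h
    rw [Set.not_infinite] at h
    exact hACinf ((h.union hfin).subset (fun x hx => by
      by_cases hxB : x ∈ B
      · exact Or.inl ⟨hx.1, hxB⟩
      · exact Or.inr ⟨hx, fun hh => hxB hh.2⟩))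
  -- so A = B by almost disjointness at level γ
  have hAB : A = B := by
    by_contra hne
    exact hABinf (hadγ A hA B hB hne)
  -- then C ⊆* A ⊆* Y, contradicting C \ Y infinite
  have hCA : (C \ A).Finite := hAB ▸ hCB
  have : (C \ Y).Finite := (hCA.union hAY).subset (fun x hx => by
    by_cases hxA : x ∈ A
    · exact Or.inr ⟨hxA, hx.2⟩
    · exact Or.inl ⟨hx.1, hxA⟩)
  exact hCYinf this
end
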